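/- For every real ε with 0 < ε ≤ 1, we have e/(1+ε)^(1+1/ε) ≤ exp(−ε/3); equivalently, 1 − (1 + 1/ε)·ln(1+ε) ≤ −ε/3. -/

import Mathlib

open Set

/-- Concavity bound: for `x ∈ [0,1]`, `log (1+x) ≥ 2x/3`. -/
lemma log_one_add_ge (x : ℝ) (h0 : 0 ≤ x) (h1 : x ≤ 1) :
    2 * x / 3 ≤ Real.log (1 + x) := by
  have hcon := strictConcaveOn_log_Ioi.concaveOn
  have h := hcon.2 (show (1:ℝ) ∈ Ioi 0 by norm_num) (show (2:ℝ) ∈ Ioi 0 by norm_num)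
    (by linarith : (0:ℝ) ≤ 1 - x) h0 (by ring)
  simp only [smul_eq_mul, Real.log_one, mul_zero, zero_add] at h
  have h2 : ((1 - x) * 1 + x * 2 : ℝ) = 1 + x := by ring
  rw [h2] at h
  have hl2 : (0.6931471803 : ℝ) < Real.log 2 := Real.log_two_gt_d9
  nlinarith [h, hl2]

lemma key_ineq (x : ℝ) (h0 : 0 ≤ x) (h1 : x ≤ 1) :
    x + x ^ 2 / 3 ≤ (1 + x) * Real.log (1 + x) := by
  set f : ℝ → ℝ := fun x => (1 + x) * Real.log (1 + x) - x - x ^ 2 / 3 with hf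
  have hd : ∀ y ∈ Icc (0:ℝ) 1, HasDerivAt f (Real.log (1 + y) - 2 * y / 3) y := by
    intro y hy
    have hy0 : (0:ℝ) < 1 + y := by linarith [hy.1]
    have h1' : HasDerivAt (fun z : ℝ => 1 + z) 1 y := (hasDerivAt_id y).const_add 1
    have hlog : HasDerivAt (fun z : ℝ => Real.log (1 + z)) (1 / (1 + y)) y := by
      simpa [Function.comp_def] using (Real.hasDerivAt_log hy0.ne').comp y h1'
    have hmul : HasDerivAt (fun z : ℝ => (1 + z) * Real.log (1 + z))
        (1 * Real.log (1 + y) + (1 + y) * (1 / (1 + y))) y := h1'.mul hlog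
    have hpoly : HasDerivAt (fun z : ℝ => z + z ^ 2 / 3) (1 + 2 * y / 3) y := by
      have := ((hasDerivAt_pow 2 y).div_const 3).const_add 0
      have h' := (hasDerivAt_id y).add ((hasDerivAt_pow 2 y).div_const 3)
      simpa [pow_one, Pi.add_def] using h'
    have := hmul.sub hpoly
    have heq : 1 * Real.log (1 + y) + (1 + y) * (1 / (1 + y)) - (1 + 2 * y / 3)
        = Real.log (1 + y) - 2 * y / 3 := by
      rw [mul_one_div_cancel hy0.ne']; ring
    rw [heq] at this
    simpa [hf, sub_sub, Pi.sub_def] using this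
  have hmono : MonotoneOn f (Icc (0:ℝ) 1) := by
    apply monotoneOn_of_deriv_nonneg (convex_Icc 0 1)
    · exact ContinuousOn.congr (fun y hy => (hd y hy).continuousAt.continuousWithinAt)
        (fun y hy => rfl) |>.mono (subset_refl _) |>.mono (subset_refl _)
    · intro y hy
      rw [interior_Icc] at hy
      exact (hd y ⟨hy.1.le, hy.2.le⟩).differentiableAt.differentiableWithinAt
    · intro y hy
      rw [interior_Icc] at hy
      rw [(hd y ⟨hy.1.le, hy.2.le⟩).deriv]
      have := log_one_add_ge y hy.1.le hy.2.le
      linarith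
  have h00 : f 0 = 0 := by simp [hf]
  have := hmono (by simp : (0:ℝ) ∈ Icc (0:ℝ) 1) (⟨h0, h1⟩ : x ∈ Icc (0:ℝ) 1) h0
  rw [h00] at this
  simp only [hf] at this
  linarith

/-- For 0 < ε ≤ 1, e/(1+ε)^(1+1/ε) ≤ exp(−ε/3), equivalently
1 − (1 + 1/ε)·ln(1+ε) ≤ −ε/3. -/
theorem exp_ratio_bound (ε : ℝ) (hε0 : 0 < ε) (hε1 : ε ≤ 1) :
    Real.exp 1 / (1 + ε) ^ ((1 : ℝ) + 1 / ε) ≤ Real.exp (-ε / 3) ∧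
    1 - (1 + 1 / ε) * Real.log (1 + ε) ≤ -ε / 3 := by
  have hkey := key_ineq ε hε0.le hε1
  have hεne : ε ≠ 0 := hε0.ne'
  have hmain : 1 - (1 + 1 / ε) * Real.log (1 + ε) ≤ -ε / 3 := by
    have h1 : (1 + 1 / ε) * Real.log (1 + ε) = ((1 + ε) * Real.log (1 + ε)) / ε := by
      field_simp
      ring
    rw [h1, sub_le_iff_le_add, ← sub_le_iff_le_add', le_div_iff₀ hε0]
    nlinarith [hkey]
  refine ⟨?_, hmain⟩
  have hpos : (0:ℝ) < 1 + ε := by linarith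
  have hrw : (1 + ε) ^ ((1 : ℝ) + 1 / ε) = Real.exp ((1 + 1 / ε) * Real.log (1 + ε)) := by
    rw [Real.rpow_def_of_pos hpos]; ring_nf
  rw [hrw, ← Real.exp_sub]
  exact Real.exp_le_exp.mpr hmain
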